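/- Let A₁ be an n₁ × n₁ real matrix, A₂ an n₂ × n₂ real matrix, and A the block-diagonal matrix on C = (Fin n₁) ⊕ (Fin n₂) with diagonal blocks A₁, A₂ and zero off-diagonal blocks. Let m ≥ 1, let c : Fin m → Fin n₁ and d : Fin m → Fin n₂ be injective, let S = {inl (c i) : i} ∪ {inr (d i) : i}, let τ : C → C be the involutive permutation that swaps inl (c i) with inr (d i) for each i and fixes all other cells, and let r be the equivalence relation on C whose only nontrivial relations are r (inl (c i)) (inr (d i)) for i : Fin m (each class is either such a pair or a singleton). Then the polydiagonal Δ_r ⊆ ℝ^C is invariant under x ↦ A.mulVec x if and only if τ is an interior symmetry of the union network on S, i.e. A s t = A (τ s) (τ t) for every s ∈ S and every t ∈ C. -/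

import Mathlib

/-- For the disjoint union network with block-diagonal adjacency matrix `A`,
a pairing of cells `c i ∈ N₁` with `d i ∈ N₂` (`c`, `d` injective), with associated
swap permutation `τ` (fixing all cells outside `S = {inl (c i)} ∪ {inr (d i)}`) and
equivalence relation `r` whose only nontrivial classes are the pairs
`{inl (c i), inr (d i)}`, the polydiagonal `Δ_r` is `A`-invariant iff `τ` is an interior
symmetry of the union network on `S`, i.e. `A s t = A (τ s) (τ t)` for all `s ∈ S` and
all cells `t`. -/
theorem pairing_bipartite_synchrony_iff_interior_symmetry
    (n₁ n₂ m : ℕ) (hm : 1 ≤ m)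
    (A₁ : Matrix (Fin n₁) (Fin n₁) ℝ) (A₂ : Matrix (Fin n₂) (Fin n₂) ℝ)
    (c : Fin m → Fin n₁) (d : Fin m → Fin n₂)
    (hc : Function.Injective c) (hd : Function.Injective d)
    (S : Set (Fin n₁ ⊕ Fin n₂))
    (hS : S = Set.range (fun i => Sum.inl (c i)) ∪ Set.range (fun i => Sum.inr (d i)))
    (τ : (Fin n₁ ⊕ Fin n₂) → (Fin n₁ ⊕ Fin n₂))
    (hτswap : ∀ i, τ (Sum.inl (c i)) = Sum.inr (d i) ∧ τ (Sum.inr (d i)) = Sum.inl (c i))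
    (hτfix : ∀ s ∉ S, τ s = s)
    (r : (Fin n₁ ⊕ Fin n₂) → (Fin n₁ ⊕ Fin n₂) → Prop)
    (hrdef : ∀ s t, r s t ↔ (s = t ∨ ∃ i : Fin m,
      (s = Sum.inl (c i) ∧ t = Sum.inr (d i)) ∨ (s = Sum.inr (d i) ∧ t = Sum.inl (c i)))) :
    (∀ x : (Fin n₁ ⊕ Fin n₂) → ℝ, (∀ i j, r i j → x i = x j) →
      (∀ i j, r i j →
        (Matrix.fromBlocks A₁ 0 0 A₂).mulVec x i = (Matrix.fromBlocks A₁ 0 0 A₂).mulVec x j)) ↔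
    (∀ s ∈ S, ∀ t, (Matrix.fromBlocks A₁ 0 0 A₂) s t = (Matrix.fromBlocks A₁ 0 0 A₂) (τ s) (τ t)) := by
  classical
  set A := Matrix.fromBlocks A₁ 0 0 A₂ with hA
  have hτinv : Function.Involutive τ := by
    intro s
    by_cases hs : s ∈ S
    · rw [hS] at hs
      rcases hs with ⟨i, rfl⟩ | ⟨i, rfl⟩
      · rw [(hτswap i).1, (hτswap i).2]
      · rw [(hτswap i).2, (hτswap i).1]
    · rw [hτfix s hs, hτfix s hs]
  have hrpair : ∀ i, r (Sum.inl (c i)) (Sum.inr (d i)) := fun i =>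
    (hrdef _ _).2 (Or.inr ⟨i, Or.inl ⟨rfl, rfl⟩⟩)
  have hrpair' : ∀ i, r (Sum.inr (d i)) (Sum.inl (c i)) := fun i =>
    (hrdef _ _).2 (Or.inr ⟨i, Or.inr ⟨rfl, rfl⟩⟩)
  have hsum : ∀ (x : (Fin n₁ ⊕ Fin n₂) → ℝ) s, A.mulVec x s = ∑ u, A s u * x u := by
    intro x s; rfl
  constructor
  · intro hinv
    have core : ∀ i t, A (Sum.inl (c i)) t = A (Sum.inr (d i)) (τ t) := by
      intro i t
      rcases t with a | b
      · by_cases ha : ∃ j, c j = a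
        · obtain ⟨j, rfl⟩ := ha
          set x : (Fin n₁ ⊕ Fin n₂) → ℝ := fun u =>
            (if u = Sum.inl (c j) then (1:ℝ) else 0) + (if u = Sum.inr (d j) then 1 else 0)
            with hx
          have hxΔ : ∀ u v, r u v → x u = x v := by
            intro u v huv
            rcases (hrdef u v).1 huv with rfl | ⟨k, ⟨rfl, rfl⟩ | ⟨rfl, rfl⟩⟩
            · rfl
            · by_cases hkj : k = j
              · subst hkj; simp [hx]
              · simp [hx, hc.ne hkj, hd.ne hkj]
            · by_cases hkj : k = j
              · subst hkj; simp [hx]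
              · simp [hx, hc.ne hkj, hd.ne hkj]
          have hcomp : ∀ s, A.mulVec x s = A s (Sum.inl (c j)) + A s (Sum.inr (d j)) := by
            intro s
            rw [hsum]
            simp [hx, mul_add, mul_ite, mul_one, mul_zero, Finset.sum_add_distrib,
              Finset.sum_ite_eq']
          have heq := hinv x hxΔ _ _ (hrpair i)
          rw [hcomp, hcomp] at heq
          rw [(hτswap j).1]
          simp only [hA, Matrix.fromBlocks_apply₁₁, Matrix.fromBlocks_apply₁₂,
            Matrix.fromBlocks_apply₂₁, Matrix.fromBlocks_apply₂₂,
            Matrix.zero_apply] at heq ⊢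
          linarith
        · push_neg at ha
          set x : (Fin n₁ ⊕ Fin n₂) → ℝ := fun u => if u = Sum.inl a then (1:ℝ) else 0 with hx
          have hxΔ : ∀ u v, r u v → x u = x v := by
            intro u v huv
            rcases (hrdef u v).1 huv with rfl | ⟨k, ⟨rfl, rfl⟩ | ⟨rfl, rfl⟩⟩
            · rfl
            · simp [hx, ha k]
            · simp [hx, ha k]
          have hcomp : ∀ s, A.mulVec x s = A s (Sum.inl a) := by
            intro s
            rw [hsum]
            simp [hx, mul_ite, mul_one, mul_zero, Finset.sum_ite_eq']
          have hfix : τ (Sum.inl a) = Sum.inl a := by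
            apply hτfix
            rw [hS]
            rintro (⟨k, hk⟩ | ⟨k, hk⟩)
            · exact ha k (Sum.inl.inj hk)
            · cases hk
          rw [hfix]
          have heq := hinv x hxΔ _ _ (hrpair i)
          rw [hcomp, hcomp] at heq
          exact heq
      · by_cases hb : ∃ j, d j = b
        · obtain ⟨j, rfl⟩ := hb
          set x : (Fin n₁ ⊕ Fin n₂) → ℝ := fun u =>
            (if u = Sum.inl (c j) then (1:ℝ) else 0) + (if u = Sum.inr (d j) then 1 else 0)
            with hx
          have hxΔ : ∀ u v, r u v → x u = x v := by
            intro u v huv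
            rcases (hrdef u v).1 huv with rfl | ⟨k, ⟨rfl, rfl⟩ | ⟨rfl, rfl⟩⟩
            · rfl
            · by_cases hkj : k = j
              · subst hkj; simp [hx]
              · simp [hx, hc.ne hkj, hd.ne hkj]
            · by_cases hkj : k = j
              · subst hkj; simp [hx]
              · simp [hx, hc.ne hkj, hd.ne hkj]
          have hcomp : ∀ s, A.mulVec x s = A s (Sum.inl (c j)) + A s (Sum.inr (d j)) := by
            intro s
            rw [hsum]
            simp [hx, mul_add, mul_ite, mul_one, mul_zero, Finset.sum_add_distrib,
              Finset.sum_ite_eq']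
          have heq := hinv x hxΔ _ _ (hrpair i)
          rw [hcomp, hcomp] at heq
          rw [(hτswap j).2]
          simp only [hA, Matrix.fromBlocks_apply₁₁, Matrix.fromBlocks_apply₁₂,
            Matrix.fromBlocks_apply₂₁, Matrix.fromBlocks_apply₂₂,
            Matrix.zero_apply] at heq ⊢
        · push_neg at hb
          set x : (Fin n₁ ⊕ Fin n₂) → ℝ := fun u => if u = Sum.inr b then (1:ℝ) else 0 with hx
          have hxΔ : ∀ u v, r u v → x u = x v := by
            intro u v huv
            rcases (hrdef u v).1 huv with rfl | ⟨k, ⟨rfl, rfl⟩ | ⟨rfl, rfl⟩⟩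
            · rfl
            · simp [hx, hb k]
            · simp [hx, hb k]
          have hcomp : ∀ s, A.mulVec x s = A s (Sum.inr b) := by
            intro s
            rw [hsum]
            simp [hx, mul_ite, mul_one, mul_zero, Finset.sum_ite_eq']
          have hfix : τ (Sum.inr b) = Sum.inr b := by
            apply hτfix
            rw [hS]
            rintro (⟨k, hk⟩ | ⟨k, hk⟩)
            · cases hk
            · exact hb k (Sum.inr.inj hk)
          rw [hfix]
          have heq := hinv x hxΔ _ _ (hrpair i)
          rw [hcomp, hcomp] at heq
          exact heq
    intro s hs t
    rw [hS] at hs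
    rcases hs with ⟨i, rfl⟩ | ⟨i, rfl⟩
    · rw [(hτswap i).1]; exact core i t
    · rw [(hτswap i).2]
      have := core i (τ t)
      rw [hτinv t] at this
      exact this.symm
  · intro hsym x hx
    have key : ∀ s ∈ S, A.mulVec x s = A.mulVec x (τ s) := by
      intro s hs
      have hxτ : ∀ u, x (τ u) = x u := by
        intro u
        by_cases hu : u ∈ S
        · rw [hS] at hu
          rcases hu with ⟨k, rfl⟩ | ⟨k, rfl⟩
          · rw [(hτswap k).1]; exact (hx _ _ (hrpair k)).symm
          · rw [(hτswap k).2]; exact (hx _ _ (hrpair' k)).symm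
        · rw [hτfix u hu]
      rw [hsum, hsum]
      rw [← Equiv.sum_comp hτinv.toPerm (fun u => A (τ s) u * x u)]
      apply Finset.sum_congr rfl
      intro u _
      simp only [Function.Involutive.coe_toPerm]
      rw [hxτ u, ← hsym s hs u]
    intro i j hrij
    rcases (hrdef i j).1 hrij with rfl | ⟨k, ⟨rfl, rfl⟩ | ⟨rfl, rfl⟩⟩
    · rfl
    · have := key _ (by rw [hS]; exact Or.inl ⟨k, rfl⟩)
      rwa [(hτswap k).1] at this
    · have := key _ (by rw [hS]; exact Or.inr ⟨k, rfl⟩)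
      rwa [(hτswap k).2] at this
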